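/- Let M be as above and λ an eigenvalue of M with λ ≠ 1. Then the row vector u with entries u_i = (λ^(i+1) - 2λ^i + 1)/(λ - 1) for 0 ≤ i ≤ 2d satisfies u·M = λ·u. -/
import Mathlib


open Matrix

/-- The incidence matrix of the morphism φ. -/
def Mmat (d : ℕ) : Matrix (Fin (2 * d + 1)) (Fin (2 * d + 1)) ℂ :=
  Matrix.of fun i j =>
    if (i : ℕ) = 0 then 1
    else if (i : ℕ) = (j : ℕ) + 1 then 1
    else if (i : ℕ) = 2 * d ∧ (j : ℕ) = 2 * d then 2
    else 0

theorem stmt_6 (d : ℕ) (hd : 1 ≤ d) (lam : ℂ)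
    (hroot : lam ^ (2 * d) * (lam - 2) ^ 2 = 1) (hne : lam ≠ 1)
    (u : Fin (2 * d + 1) → ℂ)
    (hu : ∀ i : Fin (2 * d + 1),
      u i = (lam ^ ((i : ℕ) + 1) - 2 * lam ^ (i : ℕ) + 1) / (lam - 1)) :
    Matrix.vecMul u (Mmat d) = lam • u := by
  have h1 : lam - 1 ≠ 0 := sub_ne_zero.mpr hne
  funext j
  have hsum : Matrix.vecMul u (Mmat d) j = ∑ i : Fin (2*d+1), u i *
      (if (i:ℕ) = 0 then 1 else if (i:ℕ) = (j:ℕ)+1 then 1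
       else if (i:ℕ) = 2*d ∧ (j:ℕ) = 2*d then 2 else 0) := by
    simp [Matrix.vecMul, dotProduct, Mmat]
  rw [Pi.smul_apply, smul_eq_mul, hsum]
  rcases lt_or_eq_of_le (Nat.lt_succ_iff.mp j.isLt) with hj | hj
  · -- case j.val < 2d
    have hj1 : (j:ℕ) + 1 < 2*d+1 := by omega
    have key : ∀ i : Fin (2*d+1), u i *
        (if (i:ℕ) = 0 then 1 else if (i:ℕ) = (j:ℕ)+1 then 1
         else if (i:ℕ) = 2*d ∧ (j:ℕ) = 2*d then (2:ℂ) else 0) =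
        (if i = (⟨0, by omega⟩ : Fin (2*d+1)) then u i else 0)
        + (if i = (⟨(j:ℕ)+1, hj1⟩ : Fin (2*d+1)) then u i else 0) := by
      intro i
      have hj2 : ¬((j:ℕ) = 2*d) := by omega
      simp only [Fin.ext_iff, hj2, and_false, if_false]
      split_ifs <;> first | ring1 | (exfalso; omega)
    rw [Finset.sum_congr rfl fun i _ => key i, Finset.sum_add_distrib,
      Finset.sum_ite_eq' Finset.univ, Finset.sum_ite_eq' Finset.univ]
    simp only [Finset.mem_univ, if_true]
    rw [hu, hu, hu j]
    simp only
    field_simp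
    ring
  · -- case j.val = 2d
    have hle : 2*d < 2*d+1 := by omega
    have key : ∀ i : Fin (2*d+1), u i *
        (if (i:ℕ) = 0 then 1 else if (i:ℕ) = (j:ℕ)+1 then 1
         else if (i:ℕ) = 2*d ∧ (j:ℕ) = 2*d then (2:ℂ) else 0) =
        (if i = (⟨0, by omega⟩ : Fin (2*d+1)) then u i else 0)
        + (if i = (⟨2*d, hle⟩ : Fin (2*d+1)) then 2 * u i else 0) := by
      intro i
      have hi := i.isLt
      simp only [Fin.ext_iff, hj, and_true]
      split_ifs <;> first | ring1 | (exfalso; omega)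
    rw [Finset.sum_congr rfl fun i _ => key i, Finset.sum_add_distrib,
      Finset.sum_ite_eq' Finset.univ, Finset.sum_ite_eq' Finset.univ]
    simp only [Finset.mem_univ, if_true]
    have hjeq : j = (⟨2*d, hle⟩ : Fin (2*d+1)) := by apply Fin.ext; simpa using hj
    rw [hjeq, hu, hu]
    simp only
    rw [pow_succ lam (2*d)]
    field_simp
    linear_combination -hroot
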